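/- In a 321-avoiding indecomposable permutation with left-to-right maxima π_{i_1},…,π_{i_s}, the total number of inversions equals Σ_{j=1}^{s} (π_{i_j} − i_j). -/

import Mathlib

def inversions {n : ℕ} (π : Equiv.Perm (Fin n)) : ℕ :=
  (Finset.univ.filter fun p : Fin n × Fin n => p.1 < p.2 ∧ π p.2 < π p.1).card

def Decomposable {n : ℕ} (π : Equiv.Perm (Fin n)) : Prop :=
  ∃ j : ℕ, 0 < j ∧ j < n ∧ ∀ i : Fin n, (i : ℕ) < j → (π i : ℕ) < j

def Indecomposable {n : ℕ} (π : Equiv.Perm (Fin n)) : Prop :=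
  0 < n ∧ ¬ Decomposable π

def invTable {n : ℕ} (π : Equiv.Perm (Fin n)) (i : Fin n) : ℕ :=
  (Finset.univ.filter fun j : Fin n => i < j ∧ π j < π i).card

def Avoids123 {n : ℕ} (π : Equiv.Perm (Fin n)) : Prop :=
  ¬ ∃ i j k : Fin n, i < j ∧ j < k ∧ π i < π j ∧ π j < π k

def Avoids132 {n : ℕ} (π : Equiv.Perm (Fin n)) : Prop :=
  ¬ ∃ i j k : Fin n, i < j ∧ j < k ∧ π i < π k ∧ π k < π j

def Avoids213 {n : ℕ} (π : Equiv.Perm (Fin n)) : Prop :=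
  ¬ ∃ i j k : Fin n, i < j ∧ j < k ∧ π j < π i ∧ π i < π k

def Avoids231 {n : ℕ} (π : Equiv.Perm (Fin n)) : Prop :=
  ¬ ∃ i j k : Fin n, i < j ∧ j < k ∧ π k < π i ∧ π i < π j

def Avoids312 {n : ℕ} (π : Equiv.Perm (Fin n)) : Prop :=
  ¬ ∃ i j k : Fin n, i < j ∧ j < k ∧ π j < π k ∧ π k < π i

def Avoids321 {n : ℕ} (π : Equiv.Perm (Fin n)) : Prop :=
  ¬ ∃ i j k : Fin n, i < j ∧ j < k ∧ π k < π j ∧ π j < π i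

def LTRMax {n : ℕ} (π : Equiv.Perm (Fin n)) (k : Fin n) : Prop :=
  ∀ i : Fin n, i < k → π i < π k

def revComp {n : ℕ} (π : Equiv.Perm (Fin n)) : Equiv.Perm (Fin n) :=
  Fin.revPerm * π * Fin.revPerm


open scoped Classical

lemma card_lt_val {n : ℕ} (π : Equiv.Perm (Fin n)) (i : Fin n) :
    (Finset.univ.filter fun j : Fin n => π j < π i).card = (π i : ℕ) := by
  have : (Finset.univ.filter fun j : Fin n => π j < π i)
      = (Finset.univ.filter fun v : Fin n => v < π i).map π.symm.toEmbedding := by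
    ext j
    simp [Equiv.symm_apply_eq, eq_comm]
  rw [this, Finset.card_map]
  have : (Finset.univ.filter fun v : Fin n => v < π i) = Finset.Iio (π i) := by
    ext v; simp
  rw [this, Fin.card_Iio]

lemma invTable_eq {n : ℕ} (π : Equiv.Perm (Fin n)) (h1 : Avoids321 π) (i : Fin n) :
    invTable π i = if LTRMax π i then (π i : ℕ) - (i : ℕ) else 0 := by
  split_ifs with h
  · -- LTR max case
    have hsplit : (Finset.univ.filter fun j : Fin n => π j < π i)
        = (Finset.univ.filter fun j : Fin n => j < i) ∪
          (Finset.univ.filter fun j : Fin n => i < j ∧ π j < π i) := by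
      ext j
      simp only [Finset.mem_filter, Finset.mem_union, Finset.mem_univ, true_and]
      constructor
      · intro hj
        rcases lt_trichotomy j i with hlt | he | hgt
        · exact Or.inl hlt
        · exact absurd (he ▸ hj) (lt_irrefl _)
        · exact Or.inr ⟨hgt, hj⟩
      · rintro (hlt | ⟨_, hj⟩)
        · exact h j hlt
        · exact hj
    have hdisj : Disjoint (Finset.univ.filter fun j : Fin n => j < i)
        (Finset.univ.filter fun j : Fin n => i < j ∧ π j < π i) := by
      rw [Finset.disjoint_filter]
      rintro j _ hlt ⟨hgt, _⟩
      exact absurd (hlt.trans hgt) (lt_irrefl _)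
    have hcard := card_lt_val π i
    rw [hsplit, Finset.card_union_of_disjoint hdisj] at hcard
    have hlti : (Finset.univ.filter fun j : Fin n => j < i).card = (i : ℕ) := by
      have : (Finset.univ.filter fun j : Fin n => j < i) = Finset.Iio i := by
        ext v; simp
      rw [this, Fin.card_Iio]
    rw [hlti] at hcard
    rw [invTable]
    omega
  · -- not LTR max: no inversions with i on the left
    unfold LTRMax at h
    push_neg at h
    obtain ⟨i', hi'i, hval⟩ := h
    have hval' : π i ≤ π i' := hval
    rw [invTable, Finset.card_eq_zero, Finset.filter_eq_empty_iff]
    rintro j - ⟨hij, hji⟩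
    have hne : π i ≠ π i' := fun he => absurd (π.injective he ▸ hi'i) (lt_irrefl _)
    exact h1 ⟨i', i, j, hi'i, hij, hji, lt_of_le_of_ne hval' hne⟩

lemma inversions_eq_sum {n : ℕ} (π : Equiv.Perm (Fin n)) :
    inversions π = ∑ i : Fin n, invTable π i := by
  unfold inversions invTable
  rw [Finset.card_filter]
  rw [Fintype.sum_prod_type]
  congr 1
  ext i
  rw [Finset.card_filter]

open scoped Classical in
/-- In a 321-avoiding indecomposable permutation, the number of inversions equals
the sum over the left-to-right maxima of (value minus position). -/
theorem inversions_eq_sum_ltrmax (n : ℕ) (π : Equiv.Perm (Fin n))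
    (h1 : Avoids321 π) (h2 : Indecomposable π) :
    inversions π =
      ∑ i ∈ Finset.univ.filter (fun i : Fin n => LTRMax π i),
        ((π i : ℕ) - (i : ℕ)) := by
  rw [inversions_eq_sum π]
  rw [Finset.sum_congr rfl (fun i _ => invTable_eq π h1 i)]
  rw [Finset.sum_filter]
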